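/- The polynomial R(x) = x^{p-1} + ((p−1)/p)·x^{p-2} + ... + (2/p)·x + 1/p (for p ≥ 2) has p−1 distinct complex roots, and every complex root λ of R satisfies |λ| ≤ (p−1)/p < 1. -/

import Mathlib

open Polynomial

/-- The polynomial `R(x) = x^(p-1) + ((p-1)/p)x^(p-2) + ⋯ + (2/p)x + 1/p`. -/
noncomputable def Rpoly (p : ℕ) : Polynomial ℚ :=
  ∑ k ∈ Finset.range p, C (((k : ℚ) + 1) / p) * X ^ k

open Finset in
lemma sum_shift {R : Type*} [CommRing R] (p : ℕ) (x : R) :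
    ∑ k ∈ Finset.range p, ((k:R)+1)*x^(k+1)
      = (∑ k ∈ Finset.range p, (k:R)*x^k) + p * x^p := by
  have h1 := Finset.sum_range_succ' (fun k => (k:R)*x^k) p
  have h2 := Finset.sum_range_succ (fun k => (k:R)*x^k) p
  push_cast at h1 h2 ⊢
  rw [h2] at h1
  linear_combination -h1

lemma ident1 {R : Type*} [CommRing R] (p : ℕ) (x : R) :
    (x - 1) * ∑ k ∈ Finset.range p, ((k:R)+1)*x^k
      = (p:R) * x^p - ∑ k ∈ Finset.range p, x^k := by
  have h := sum_shift p x
  have h2 : (x - 1) * ∑ k ∈ Finset.range p, ((k:R)+1)*x^k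
      = (∑ k ∈ Finset.range p, ((k:R)+1)*x^(k+1)) - ∑ k ∈ Finset.range p, ((k:R)+1)*x^k := by
    rw [sub_mul, one_mul, Finset.mul_sum]
    congr 1
    exact Finset.sum_congr rfl fun k _ => by ring
  have h3 : ∑ k ∈ Finset.range p, ((k:R)+1)*x^k
      = (∑ k ∈ Finset.range p, (k:R)*x^k) + ∑ k ∈ Finset.range p, x^k := by
    rw [← Finset.sum_add_distrib]
    exact Finset.sum_congr rfl fun k _ => by ring
  rw [h2, h, h3]
  ring

lemma ident2 {R : Type*} [CommRing R] (p : ℕ) (x : R) :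
    ((p:R) - 1 - (p:R)*x) * ∑ k ∈ Finset.range p, ((k:R)+1)*x^k
      = (∑ k ∈ Finset.range p, ((p:R)-1-(k:R))*x^k) - (p:R)^2 * x^p := by
  have h1 := ident1 p x
  have h3 : ∑ k ∈ Finset.range p, ((p:R)-1-(k:R))*x^k
      = (p:R) * (∑ k ∈ Finset.range p, x^k) - ∑ k ∈ Finset.range p, ((k:R)+1)*x^k := by
    rw [Finset.mul_sum, ← Finset.sum_sub_distrib]
    exact Finset.sum_congr rfl fun k _ => by ring
  rw [h3]
  linear_combination (-(p:R)) * h1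

lemma coeff_Rpoly (p n : ℕ) :
    (Rpoly p).coeff n = if n < p then ((n:ℚ)+1)/p else 0 := by
  rw [Rpoly, finset_sum_coeff]
  simp only [coeff_C_mul, coeff_X_pow]
  simp only [mul_ite, mul_one, mul_zero]
  rw [Finset.sum_ite_eq (Finset.range p) n (fun k => ((k:ℚ)+1)/p)]
  simp [Finset.mem_range]

lemma natDegree_Rpoly (p : ℕ) (hp : 2 ≤ p) : (Rpoly p).natDegree = p - 1 := by
  have hp0 : (p:ℚ) ≠ 0 := by positivity
  apply le_antisymm
  · rw [natDegree_le_iff_coeff_eq_zero]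
    intro N hN
    rw [coeff_Rpoly]
    rw [if_neg (by omega)]
  · apply le_natDegree_of_ne_zero
    rw [coeff_Rpoly, if_pos (by omega)]
    have : (0:ℚ) < ((p-1:ℕ):ℚ) + 1 := by positivity
    positivity

lemma eval_Smap (p : ℕ) (x : ℂ) :
    ((Rpoly p).map (algebraMap ℚ ℂ)).eval x
      = ∑ k ∈ Finset.range p, (((k:ℂ)+1)/p) * x^k := by
  rw [eval_map, Rpoly, eval₂_finset_sum]
  apply Finset.sum_congr rfl
  intro k _
  rw [eval₂_mul, eval₂_C, eval₂_X_pow]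
  norm_num

lemma Smap_ne_zero (p : ℕ) (hp : 2 ≤ p) : (Rpoly p).map (algebraMap ℚ ℂ) ≠ 0 := by
  intro h
  have h0 : ((Rpoly p).map (algebraMap ℚ ℂ)).coeff 0 ≠ 0 := by
    rw [coeff_map, coeff_Rpoly, if_pos (by omega)]
    have hp0 : (0:ℚ) < ((0:ℚ)+1)/p := by positivity
    simp only [eq_ratCast, ne_eq, Rat.cast_eq_zero]
    exact hp0.ne'
  rw [h] at h0
  simp at h0

lemma key_ident (p : ℕ) (hp : 2 ≤ p) :
    (X - 1)^2 * (C (p:ℂ) * ((Rpoly p).map (algebraMap ℚ ℂ)))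
      = C (p:ℂ) * X^(p+1) - (C (p:ℂ) + 1) * X^p + 1 := by
  have hp0 : (p:ℂ) ≠ 0 := by
    exact_mod_cast Nat.cast_ne_zero.mpr (by omega)
  apply Polynomial.funext
  intro x
  have hs : (p:ℂ) * ((Rpoly p).map (algebraMap ℚ ℂ)).eval x
      = ∑ k ∈ Finset.range p, ((k:ℂ)+1)*x^k := by
    rw [eval_Smap, Finset.mul_sum]
    apply Finset.sum_congr rfl
    intro k _
    field_simp
  have h1 := ident1 p x
  have hg := geom_sum_mul x p
  simp only [eval_mul, eval_pow, eval_sub, eval_add, eval_one, eval_X, eval_C]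
  calc (x-1)^2 * ((p:ℂ) * ((Rpoly p).map (algebraMap ℚ ℂ)).eval x)
      = (x-1) * ((x-1) * ∑ k ∈ Finset.range p, ((k:ℂ)+1)*x^k) := by rw [hs]; ring
    _ = (p:ℂ) * x^(p+1) - ((p:ℂ)+1) * x^p + 1 := by
        rw [h1]; linear_combination -hg

lemma nodup_roots_Smap (p : ℕ) (hp : 2 ≤ p) :
    ((Rpoly p).map (algebraMap ℚ ℂ)).roots.Nodup := by
  classical
  set S := (Rpoly p).map (algebraMap ℚ ℂ) with hSdef
  have hp0 : (p:ℂ) ≠ 0 := Nat.cast_ne_zero.mpr (by omega)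
  rw [Multiset.nodup_iff_count_le_one]
  intro a
  rw [count_roots]
  by_contra hcnt
  push_neg at hcnt
  have h2 : 2 ≤ rootMultiplicity a S := hcnt
  have hdvd2 : (X - C a)^2 ∣ S :=
    dvd_trans (pow_dvd_pow _ h2) (pow_rootMultiplicity_dvd S a)
  -- a is a root of S
  have hroot : S.eval a = 0 := by
    have : (X - C a) ∣ S := dvd_trans (dvd_pow_self _ (by norm_num)) hdvd2
    exact (dvd_iff_isRoot.mp this)
  obtain ⟨u, hu⟩ := hdvd2
  -- the explicit polynomial G
  set G : ℂ[X] := C (p:ℂ) * X^(p+1) - (C (p:ℂ) + 1) * X^p + 1 with hGdef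
  have hG : G = (X - C a)^2 * ((X - 1)^2 * C (p:ℂ) * u) := by
    rw [hGdef, ← key_ident p hp, hSdef] at *
    rw [hu]; ring
  -- derivative of G vanishes at a
  have hder : (derivative G).eval a = 0 := by
    rw [hG]
    simp [derivative_mul, derivative_pow]
  -- explicit derivative
  have hder2 : (derivative G).eval a
      = (p:ℂ) * ((p:ℂ)+1) * a^p - ((p:ℂ)+1) * (p:ℂ) * a^(p-1) := by
    rw [hGdef]
    simp [derivative_pow]
    ring
  have hpp1 : ((p:ℂ)+1) ≠ 0 := by
    have h' : ((p+1 : ℕ):ℂ) ≠ 0 := Nat.cast_ne_zero.mpr (by omega)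
    push_cast at h'
    exact h'
  have hap : a^p = a^(p-1) * a := by
    rw [← pow_succ]
    congr 1
    omega
  have h0 : (p:ℂ) * ((p:ℂ)+1) * a^p - ((p:ℂ)+1) * (p:ℂ) * a^(p-1) = 0 := by
    rw [← hder2]; exact hder
  have hfac : a^(p-1) * (a - 1) = 0 := by
    have hz : (p:ℂ)*((p:ℂ)+1) * (a^(p-1)*(a-1)) = 0 := by
      linear_combination h0 - ((p:ℂ)*((p:ℂ)+1))*hap
    exact (mul_eq_zero.mp hz).resolve_left (mul_ne_zero hp0 hpp1)
  rcases mul_eq_zero.mp hfac with h | h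
  · -- a = 0, but S(0) ≠ 0
    have ha0 : a = 0 := by
      have : p - 1 ≠ 0 := by omega
      exact pow_eq_zero_iff this |>.mp h
    have hc : S.coeff 0 ≠ 0 := by
      rw [hSdef, coeff_map, coeff_Rpoly, if_pos (by omega)]
      have hq : (0:ℚ) < ((0:ℚ)+1)/p := by positivity
      simp only [eq_ratCast, ne_eq, Rat.cast_eq_zero]
      exact hq.ne'
    rw [coeff_zero_eq_eval_zero] at hc
    rw [ha0] at hroot
    exact hc hroot
  · -- a = 1, but S(1) ≠ 0
    have ha1 : a = 1 := by linear_combination h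
    rw [ha1, hSdef, eval_Smap] at hroot
    simp only [one_pow, mul_one] at hroot
    have hs1 : ∑ k ∈ Finset.range p, ((k:ℂ)+1) = 0 := by
      have : ∑ k ∈ Finset.range p, ((k:ℂ)+1)
          = (p:ℂ) * ∑ k ∈ Finset.range p, (((k:ℂ)+1)/p) := by
        rw [Finset.mul_sum]
        exact Finset.sum_congr rfl fun k _ => by field_simp
      rw [this, hroot, mul_zero]
    have hnat : ∑ k ∈ Finset.range p, ((k:ℂ)+1)
        = ((∑ k ∈ Finset.range p, (k+1) : ℕ) : ℂ) := by
      push_cast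
      rfl
    rw [hnat] at hs1
    have hpos : 0 < ∑ k ∈ Finset.range p, (k+1) :=
      Finset.sum_pos (fun k _ => by omega) ⟨0, Finset.mem_range.mpr (by omega)⟩
    exact (Nat.cast_ne_zero.mpr hpos.ne') hs1

/-- `R` has `p-1` distinct complex roots, all of modulus at most
`(p-1)/p < 1`. -/
theorem Rpoly_roots (p : ℕ) (hp : 2 ≤ p) :
    ((Rpoly p).map (algebraMap ℚ ℂ)).roots.toFinset.card = p - 1 ∧
    (∀ l : ℂ, l ∈ ((Rpoly p).map (algebraMap ℚ ℂ)).roots →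
      ‖l‖ ≤ ((p : ℝ) - 1) / p) ∧
    ((p : ℝ) - 1) / p < 1 := by
  classical
  have hpR : (0:ℝ) < p := by positivity
  have hpC : (p:ℂ) ≠ 0 := Nat.cast_ne_zero.mpr (by omega)
  set S := (Rpoly p).map (algebraMap ℚ ℂ) with hSdef
  have hS0 : S ≠ 0 := Smap_ne_zero p hp
  refine ⟨?_, ?_, ?_⟩
  · -- card
    have hnd := nodup_roots_Smap p hp
    rw [Multiset.toFinset_card_of_nodup hnd]
    have hsp : Splits S := by
      rw [hSdef]
      exact IsAlgClosed.splits _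
    rw [(splits_iff_card_roots).mp hsp, hSdef, natDegree_map, natDegree_Rpoly p hp]
  · -- modulus bound
    intro l hl
    have hroot : S.eval l = 0 := (mem_roots hS0).mp hl
    set β : ℝ := ((p:ℝ) - 1) / p with hβ
    by_contra hgt
    push_neg at hgt
    set t : ℝ := ‖l‖ with ht
    have hβ0 : 0 ≤ β := by
      rw [hβ]
      have h1p : (1:ℝ) ≤ p := by exact_mod_cast (by omega : 1 ≤ p)
      apply div_nonneg (by linarith) hpR.le
    have ht0 : 0 < t := lt_of_le_of_lt hβ0 hgt
    -- root equation
    have hA : ∑ k ∈ Finset.range p, ((p:ℂ)-1-(k:ℂ))*l^k = (p:ℂ)^2 * l^p := by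
      have hs : ∑ k ∈ Finset.range p, ((k:ℂ)+1)*l^k = 0 := by
        have : ∑ k ∈ Finset.range p, ((k:ℂ)+1)*l^k
            = (p:ℂ) * ∑ k ∈ Finset.range p, (((k:ℂ)+1)/p)*l^k := by
          rw [Finset.mul_sum]
          exact Finset.sum_congr rfl fun k _ => by field_simp
        rw [this, ← eval_Smap, ← hSdef, hroot, mul_zero]
      have h2 := ident2 p l
      rw [hs, mul_zero] at h2
      linear_combination -h2
    -- take absolute values
    have habs : (p:ℝ)^2 * t^p ≤ ∑ k ∈ Finset.range p, ((p:ℝ)-1-(k:ℝ))*t^k := by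
      have h1 : ‖(p:ℂ)^2 * l^p‖ = (p:ℝ)^2 * t^p := by
        rw [norm_mul, norm_pow, norm_pow, Complex.norm_natCast, ht]
      rw [← h1, ← hA]
      refine le_trans (norm_sum_le _ _) ?_
      apply Finset.sum_le_sum
      intro k hk
      rw [norm_mul, norm_pow]
      have hcast : ‖(p:ℂ)-1-(k:ℂ)‖ = (p:ℝ)-1-(k:ℝ) := by
        have hk' : k < p := Finset.mem_range.mp hk
        have : ((p:ℂ)-1-(k:ℂ)) = (((p - 1 - k : ℕ)):ℂ) := by
          push_cast [Nat.cast_sub (by omega : k ≤ p - 1), Nat.cast_sub (by omega : 1 ≤ p)]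
          ring
        rw [this, Complex.norm_natCast]
        push_cast [Nat.cast_sub (by omega : k ≤ p - 1), Nat.cast_sub (by omega : 1 ≤ p)]
        ring
      rw [hcast, ht]
    -- termwise comparison
    have hterm : ∀ k ∈ Finset.range p,
        ((p:ℝ)-1-(k:ℝ))*t^k * β^(p-1) ≤ ((p:ℝ)-1-(k:ℝ))*t^(p-1) * β^k := by
      intro k hk
      have hk' : k < p := Finset.mem_range.mp hk
      have hc0 : (0:ℝ) ≤ (p:ℝ)-1-(k:ℝ) := by
        have : ((k:ℝ)) ≤ (p:ℝ) - 1 := by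
          have : (k:ℝ) + 1 ≤ (p:ℝ) := by exact_mod_cast (by omega : k + 1 ≤ p)
          linarith
        linarith
      have hsplit : p - 1 = k + (p - 1 - k) := by omega
      have hβt : β^(p-1-k) ≤ t^(p-1-k) := pow_le_pow_left₀ hβ0 hgt.le _
      have e1 : t^(p-1) = t^k * t^(p-1-k) := by rw [← pow_add]; congr 1
      have e2 : β^(p-1) = β^k * β^(p-1-k) := by rw [← pow_add]; congr 1
      calc ((p:ℝ)-1-(k:ℝ))*t^k * β^(p-1)
          = ((p:ℝ)-1-(k:ℝ)) * (t^k * β^k) * β^(p-1-k) := by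
            rw [e2]; ring
        _ ≤ ((p:ℝ)-1-(k:ℝ)) * (t^k * β^k) * t^(p-1-k) := by
            apply mul_le_mul_of_nonneg_left hβt
            positivity
        _ = ((p:ℝ)-1-(k:ℝ))*t^(p-1) * β^k := by
            rw [e1]; ring
    -- identity at β
    have hβid : ∑ k ∈ Finset.range p, ((p:ℝ)-1-(k:ℝ))*β^k = (p:ℝ)^2 * β^p := by
      have h2 := ident2 p β
      have hz : ((p:ℝ) - 1 - (p:ℝ)*β) = 0 := by
        rw [hβ]; field_simp; ring
      rw [hz, zero_mul] at h2
      linarith [h2]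
    -- combine
    have hchain : (p:ℝ)^2 * t^p * β^(p-1) ≤ (p:ℝ)^2 * β^p * t^(p-1) := by
      calc (p:ℝ)^2 * t^p * β^(p-1)
          ≤ (∑ k ∈ Finset.range p, ((p:ℝ)-1-(k:ℝ))*t^k) * β^(p-1) := by
            apply mul_le_mul_of_nonneg_right habs (by positivity)
        _ = ∑ k ∈ Finset.range p, ((p:ℝ)-1-(k:ℝ))*t^k * β^(p-1) := by
            rw [Finset.sum_mul]
        _ ≤ ∑ k ∈ Finset.range p, ((p:ℝ)-1-(k:ℝ))*t^(p-1) * β^k :=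
            Finset.sum_le_sum hterm
        _ = (∑ k ∈ Finset.range p, ((p:ℝ)-1-(k:ℝ))*β^k) * t^(p-1) := by
            rw [Finset.sum_mul]
            exact Finset.sum_congr rfl fun k _ => by ring
        _ = (p:ℝ)^2 * β^p * t^(p-1) := by rw [hβid]
    -- derive contradiction : t ≤ β
    have hβpos : 0 < β := by
      rw [hβ]
      have : (2:ℝ) ≤ p := by exact_mod_cast hp
      have h1 : (0:ℝ) < (p:ℝ) - 1 := by linarith
      positivity
    have htp : t^p = t^(p-1) * t := by
      rw [← pow_succ]; congr 1; omega
    have hβp : β^p = β^(p-1) * β := by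
      rw [← pow_succ]; congr 1; omega
    rw [htp, hβp] at hchain
    have hfin : t ≤ β := by
      have hpos : (0:ℝ) < (p:ℝ)^2 * t^(p-1) * β^(p-1) := by positivity
      nlinarith [hchain, hpos]
    linarith [hgt]
  · -- β < 1
    rw [div_lt_one hpR]
    linarith
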